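/- Fix an integer n ≥ 1, let ε = 1/n, and let the grid squares be the n² half-open squares Q_{ij} = [iε, (i+1)ε) × [jε, (j+1)ε) for i, j ∈ {0, …, n−1}, which partition [0,1)². Let a, b be nonnegative integers and let A, B ⊆ [0,1)² be disjoint finite sets with |A ∩ Q| = a and |B ∩ Q| = b for every grid square Q. Let D ⊆ [0,1)² be Lebesgue measurable and let E be the number of grid squares Q with Q ∩ frontier(D) ≠ ∅. If b·(vol(D) + ε²·E) ≤ a·(vol(D) − ε²·E), then |B ∩ D| ≤ |A ∩ D|. -/

import Mathlib

open MeasureTheory Metric Set ENNReal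

noncomputable section

/-- The plane `ℝ²` with the Euclidean metric. -/
abbrev Plane := EuclideanSpace ℝ (Fin 2)

/-- The half-open grid square `Q_{ij} = [iε, (i+1)ε) × [jε, (j+1)ε)` with `ε = 1/n`. -/
def gridSq (n : ℕ) (p : Fin n × Fin n) : Set Plane :=
  {x | x 0 ∈ Set.Ico ((p.1 : ℝ) * (n : ℝ)⁻¹) (((p.1 : ℝ) + 1) * (n : ℝ)⁻¹) ∧
       x 1 ∈ Set.Ico ((p.2 : ℝ) * (n : ℝ)⁻¹) (((p.2 : ℝ) + 1) * (n : ℝ)⁻¹)}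

/-- The half-open unit square `[0,1)² ⊆ ℝ²`. -/
def unitSqIco : Set Plane := {x | x 0 ∈ Set.Ico (0 : ℝ) 1 ∧ x 1 ∈ Set.Ico (0 : ℝ) 1}

-- aux counting lemmas
lemma aux_ncard_biUnion_le {ι α : Type*} (T : Finset ι) (s : ι → Set α) :
    (⋃ i ∈ T, s i).ncard ≤ ∑ i ∈ T, (s i).ncard := by
  classical
  induction T using Finset.induction_on with
  | empty => simp
  | insert i T hiT ih =>
    rw [Finset.set_biUnion_insert, Finset.sum_insert hiT]
    exact le_trans (Set.ncard_union_le _ _) (by omega)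

lemma aux_ncard_biUnion_eq {ι α : Type*} (T : Finset ι) (s : ι → Set α)
    (hfin : ∀ i, (s i).Finite)
    (hdisj : ∀ i ∈ T, ∀ j ∈ T, i ≠ j → Disjoint (s i) (s j)) :
    (⋃ i ∈ T, s i).ncard = ∑ i ∈ T, (s i).ncard := by
  classical
  induction T using Finset.induction_on with
  | empty => simp
  | insert i T hiT ih =>
    rw [Finset.set_biUnion_insert, Finset.sum_insert hiT]
    have hdd : Disjoint (s i) (⋃ j ∈ T, s j) := by
      rw [Set.disjoint_iUnion_right]
      intro j
      rw [Set.disjoint_iUnion_right]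
      intro hj
      exact hdisj i (Finset.mem_insert_self i T) j (Finset.mem_insert_of_mem hj)
        (by rintro rfl; exact hiT hj)
    rw [Set.ncard_union_eq hdd (hfin i) (Set.Finite.biUnion T.finite_toSet fun j _ => hfin j)]
    rw [ih (fun j hj => fun k hk => hdisj j (Finset.mem_insert_of_mem hj) k
        (Finset.mem_insert_of_mem hk))]

lemma coord_unique {n : ℕ} {i j : Fin n} {t : ℝ}
    (hi : t ∈ Set.Ico ((i : ℝ) * (n : ℝ)⁻¹) (((i : ℝ) + 1) * (n : ℝ)⁻¹))
    (hj : t ∈ Set.Ico ((j : ℝ) * (n : ℝ)⁻¹) (((j : ℝ) + 1) * (n : ℝ)⁻¹)) : i = j := by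
  have hinv : (0:ℝ) ≤ (n : ℝ)⁻¹ := by positivity
  by_contra hne
  rcases Ne.lt_or_gt hne with h | h
  · have h1 : ((i : ℝ) + 1) ≤ (j : ℝ) := by exact_mod_cast (Fin.lt_iff_val_lt_val.1 h)
    have := lt_of_lt_of_le hi.2 (le_trans (mul_le_mul_of_nonneg_right h1 hinv) hj.1)
    exact lt_irrefl _ this
  · have h1 : ((j : ℝ) + 1) ≤ (i : ℝ) := by exact_mod_cast (Fin.lt_iff_val_lt_val.1 h)
    have := lt_of_lt_of_le hj.2 (le_trans (mul_le_mul_of_nonneg_right h1 hinv) hi.1)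
    exact lt_irrefl _ this

lemma gridSq_disjoint {n : ℕ} {p q : Fin n × Fin n} (hpq : p ≠ q) :
    Disjoint (gridSq n p) (gridSq n q) := by
  rw [Set.disjoint_left]
  intro x hxp hxq
  exact hpq (Prod.ext (coord_unique hxp.1 hxq.1) (coord_unique hxp.2 hxq.2))

lemma exists_coord {n : ℕ} (hn : 1 ≤ n) {t : ℝ} (ht : t ∈ Set.Ico (0 : ℝ) 1) :
    ∃ i : Fin n, t ∈ Set.Ico ((i : ℝ) * (n : ℝ)⁻¹) (((i : ℝ) + 1) * (n : ℝ)⁻¹) := by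
  have hn' : (0:ℝ) < n := by exact_mod_cast hn
  have h0 : (0:ℝ) ≤ t * n := mul_nonneg ht.1 hn'.le
  have h1 : t * n < n := by nlinarith [ht.2]
  set k := ⌊t * n⌋ with hk
  have hk0 : 0 ≤ k := Int.floor_nonneg.2 h0
  have hkn : k < (n : ℤ) := Int.floor_lt.2 (by exact_mod_cast h1)
  have hcast : ((k.toNat : ℕ) : ℝ) = (k : ℝ) := by exact_mod_cast Int.toNat_of_nonneg hk0
  have hle : ((k : ℝ)) ≤ t * n := Int.floor_le _
  have hlt : t * n < (k : ℝ) + 1 := Int.lt_floor_add_one _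
  have hnlt : k.toNat < n := by omega
  have hinv : (n:ℝ) * (n:ℝ)⁻¹ = 1 := mul_inv_cancel₀ hn'.ne'
  have hinv0 : (0:ℝ) ≤ (n:ℝ)⁻¹ := by positivity
  refine ⟨⟨k.toNat, hnlt⟩, ?_, ?_⟩
  · show ((k.toNat : ℕ) : ℝ) * (n:ℝ)⁻¹ ≤ t
    rw [hcast]
    nlinarith
  · show t < (((k.toNat : ℕ) : ℝ) + 1) * (n:ℝ)⁻¹
    rw [hcast]
    nlinarith

lemma exists_gridSq {n : ℕ} (hn : 1 ≤ n) {x : Plane} (hx : x ∈ unitSqIco) :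
    ∃ p : Fin n × Fin n, x ∈ gridSq n p := by
  obtain ⟨i, hi⟩ := exists_coord hn hx.1
  obtain ⟨j, hj⟩ := exists_coord hn hx.2
  exact ⟨(i, j), hi, hj⟩

lemma gridSq_convex {n : ℕ} (p : Fin n × Fin n) : Convex ℝ (gridSq n p) := by
  intro x hx y hy s t hs ht hst
  constructor
  · have h := (convex_Ico ((p.1 : ℝ) * (n : ℝ)⁻¹) (((p.1 : ℝ) + 1) * (n : ℝ)⁻¹)) hx.1 hy.1 hs ht hst
    simpa [smul_eq_mul] using h
  · have h := (convex_Ico ((p.2 : ℝ) * (n : ℝ)⁻¹) (((p.2 : ℝ) + 1) * (n : ℝ)⁻¹)) hx.2 hy.2 hs ht hst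
    simpa [smul_eq_mul] using h

lemma gridSq_measurable {n : ℕ} (p : Fin n × Fin n) : MeasurableSet (gridSq n p) := by
  exact MeasurableSet.inter (measurableSet_Ico.preimage (by fun_prop : Measurable fun x : Plane => x 0))
    (measurableSet_Ico.preimage (by fun_prop : Measurable fun x : Plane => x 1))

lemma gridSq_volume {n : ℕ} (hn : 1 ≤ n) (p : Fin n × Fin n) :
    volume (gridSq n p) = ENNReal.ofReal ((n : ℝ)⁻¹) ^ 2 := by
  have hn' : (0:ℝ) < n := by exact_mod_cast hn
  have hmp := EuclideanSpace.volume_preserving_symm_measurableEquiv_toLp (Fin 2)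
  have hset : gridSq n p = (MeasurableEquiv.toLp 2 (Fin 2 → ℝ)).symm ⁻¹'
      (Set.univ.pi ![Set.Ico ((p.1 : ℝ) * (n : ℝ)⁻¹) (((p.1 : ℝ) + 1) * (n : ℝ)⁻¹),
        Set.Ico ((p.2 : ℝ) * (n : ℝ)⁻¹) (((p.2 : ℝ) + 1) * (n : ℝ)⁻¹)]) := by
    ext x
    simp [gridSq, Set.mem_univ_pi, Fin.forall_fin_two]
  rw [hset, hmp.measure_preimage_equiv, volume_pi_pi, Fin.prod_univ_two]
  simp only [Matrix.cons_val_zero, Matrix.cons_val_one, Matrix.head_cons, Real.volume_Ico]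
  have h1 : ((p.1 : ℝ) + 1) * (n : ℝ)⁻¹ - (p.1 : ℝ) * (n : ℝ)⁻¹ = (n:ℝ)⁻¹ := by ring
  have h2 : ((p.2 : ℝ) + 1) * (n : ℝ)⁻¹ - (p.2 : ℝ) * (n : ℝ)⁻¹ = (n:ℝ)⁻¹ := by ring
  rw [h1, h2, sq]

lemma gridSq_trichotomy {n : ℕ} (p : Fin n × Fin n) (D : Set Plane)
    (hempty : ¬(gridSq n p ∩ frontier D).Nonempty) :
    gridSq n p ⊆ interior D ∨ gridSq n p ∩ closure D = ∅ := by
  have hsub : gridSq n p ⊆ interior D ∪ (closure D)ᶜ := by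
    intro x hx
    by_cases hxi : x ∈ interior D
    · exact Or.inl hxi
    · refine Or.inr fun hxc => hempty ⟨x, hx, hxc, hxi⟩
  have hdisj : Disjoint (interior D) (closure D)ᶜ :=
    Set.disjoint_compl_right_iff_subset.2 interior_subset_closure
  rcases (gridSq_convex p).isPreconnected.subset_or_subset isOpen_interior
    isClosed_closure.isOpen_compl hdisj hsub with h | h
  · exact Or.inl h
  · exact Or.inr (Set.disjoint_iff_inter_eq_empty.1 (Set.subset_compl_iff_disjoint_right.1 h))

/-- **Winning criterion.** With `a` voters of `A` and `b` voters of `B` in every grid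
square, party `A` carries any measurable district `D ⊆ [0,1)²` satisfying
`b·(vol D + ε²·E) ≤ a·(vol D - ε²·E)`, where `E` is the number of grid squares meeting
`frontier D`. -/
theorem winning_criterion (n : ℕ) (hn : 1 ≤ n) (a b : ℕ) (A B : Set Plane)
    (hAfin : A.Finite) (hBfin : B.Finite) (hdisj : Disjoint A B)
    (hAsub : A ⊆ unitSqIco) (hBsub : B ⊆ unitSqIco)
    (hcA : ∀ p : Fin n × Fin n, (A ∩ gridSq n p).ncard = a)
    (hcB : ∀ p : Fin n × Fin n, (B ∩ gridSq n p).ncard = b)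
    (D : Set Plane) (hD : MeasurableSet D) (hDsub : D ⊆ unitSqIco)
    (hineq : (b : ℝ) * ((volume D).toReal +
        ((n : ℝ)⁻¹) ^ 2 * ({p : Fin n × Fin n | (gridSq n p ∩ frontier D).Nonempty}.ncard : ℝ))
      ≤ (a : ℝ) * ((volume D).toReal -
        ((n : ℝ)⁻¹) ^ 2 * ({p : Fin n × Fin n | (gridSq n p ∩ frontier D).Nonempty}.ncard : ℝ))) :
    (B ∩ D).ncard ≤ (A ∩ D).ncard := by
  classical
  have hn0 : (0:ℝ) < n := by exact_mod_cast hn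
  set ε : ℝ := (n : ℝ)⁻¹ with hεdef
  have hε0 : 0 < ε := by positivity
  set bdS : Set (Fin n × Fin n) := {p | (gridSq n p ∩ frontier D).Nonempty} with hbdS
  set Ebd : Finset (Fin n × Fin n) := (Set.toFinite bdS).toFinset with hEbd
  set Ins : Finset (Fin n × Fin n) :=
    (Set.toFinite {p : Fin n × Fin n | gridSq n p ⊆ interior D}).toFinset with hIns
  set T : Finset (Fin n × Fin n) := Ins ∪ Ebd with hT
  have hEcard : bdS.ncard = Ebd.card := Set.ncard_eq_toFinset_card _ _
  -- every point of D lies in a grid square indexed by T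
  have hmemT : ∀ x ∈ D, ∃ p ∈ T, x ∈ gridSq n p := by
    intro x hx
    obtain ⟨p, hp⟩ := exists_gridSq hn (hDsub hx)
    refine ⟨p, ?_, hp⟩
    rw [hT, Finset.mem_union]
    by_contra hcon
    push_neg at hcon
    have h1 : ¬ gridSq n p ⊆ interior D := by
      intro hsub
      exact hcon.1 (by rw [hIns, Set.Finite.mem_toFinset]; exact hsub)
    have h2 : ¬ (gridSq n p ∩ frontier D).Nonempty := by
      intro hne
      exact hcon.2 (by rw [hEbd, Set.Finite.mem_toFinset]; exact hne)
    rcases gridSq_trichotomy p D h2 with h | h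
    · exact h1 h
    · exact absurd (Set.mem_inter hp (subset_closure hx)) (by rw [h]; exact Set.notMem_empty x)
  -- count of B
  have hBcount : (B ∩ D).ncard ≤ b * T.card := by
    have hsub : B ∩ D ⊆ ⋃ p ∈ T, (B ∩ gridSq n p) := by
      rintro x ⟨hxB, hxD⟩
      obtain ⟨p, hpT, hp⟩ := hmemT x hxD
      exact Set.mem_biUnion hpT ⟨hxB, hp⟩
    calc (B ∩ D).ncard ≤ (⋃ p ∈ T, (B ∩ gridSq n p)).ncard :=
          Set.ncard_le_ncard hsub (Set.Finite.biUnion T.finite_toSet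
            fun p _ => hBfin.subset Set.inter_subset_left)
      _ ≤ ∑ p ∈ T, (B ∩ gridSq n p).ncard := aux_ncard_biUnion_le T _
      _ = ∑ p ∈ T, b := by exact Finset.sum_congr rfl fun p _ => hcB p
      _ = b * T.card := by rw [Finset.sum_const, smul_eq_mul, mul_comm]
  -- count of A
  have hAcount : a * Ins.card ≤ (A ∩ D).ncard := by
    have hsub : (⋃ p ∈ Ins, (A ∩ gridSq n p)) ⊆ A ∩ D := by
      intro x hx
      rw [Set.mem_iUnion₂] at hx
      obtain ⟨p, hpI, hxA, hxp⟩ := hx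
      rw [hIns, Set.Finite.mem_toFinset] at hpI
      exact ⟨hxA, interior_subset (hpI hxp)⟩
    have heq : (⋃ p ∈ Ins, (A ∩ gridSq n p)).ncard = ∑ p ∈ Ins, (A ∩ gridSq n p).ncard :=
      aux_ncard_biUnion_eq Ins _ (fun p => hAfin.subset Set.inter_subset_left)
        (fun p _ q _ hpq => (gridSq_disjoint hpq).mono Set.inter_subset_right
          Set.inter_subset_right)
    have : ∑ p ∈ Ins, (A ∩ gridSq n p).ncard = a * Ins.card := by
      rw [Finset.sum_congr rfl fun p _ => hcA p, Finset.sum_const, smul_eq_mul, mul_comm]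
    calc a * Ins.card = (⋃ p ∈ Ins, (A ∩ gridSq n p)).ncard := by rw [heq, this]
      _ ≤ (A ∩ D).ncard := Set.ncard_le_ncard hsub
          (Set.Finite.subset (hAfin.subset Set.inter_subset_left) (subset_refl _))
  -- volume bounds
  have hvolIns : (Ins.card : ℝ≥0∞) * ENNReal.ofReal ε ^ 2 ≤ volume D := by
    have hsub : (⋃ p ∈ Ins, gridSq n p) ⊆ D := by
      intro x hx
      rw [Set.mem_iUnion₂] at hx
      obtain ⟨p, hpI, hxp⟩ := hx
      rw [hIns, Set.Finite.mem_toFinset] at hpI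
      exact interior_subset (hpI hxp)
    calc (Ins.card : ℝ≥0∞) * ENNReal.ofReal ε ^ 2
        = ∑ p ∈ Ins, volume (gridSq n p) := by
          rw [Finset.sum_congr rfl fun p _ => gridSq_volume hn p, Finset.sum_const,
            nsmul_eq_mul]
      _ = volume (⋃ p ∈ Ins, gridSq n p) := (measure_biUnion_finset
            (fun p _ q _ hpq => gridSq_disjoint hpq) fun p _ => gridSq_measurable p).symm
      _ ≤ volume D := measure_mono hsub
  have hvolT : volume D ≤ (T.card : ℝ≥0∞) * ENNReal.ofReal ε ^ 2 := by
    have hsub : D ⊆ ⋃ p ∈ T, gridSq n p := by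
      intro x hx
      obtain ⟨p, hpT, hp⟩ := hmemT x hx
      exact Set.mem_biUnion hpT hp
    calc volume D ≤ volume (⋃ p ∈ T, gridSq n p) := measure_mono hsub
      _ ≤ ∑ p ∈ T, volume (gridSq n p) := measure_biUnion_finset_le T _
      _ = (T.card : ℝ≥0∞) * ENNReal.ofReal ε ^ 2 := by
          rw [Finset.sum_congr rfl fun p _ => gridSq_volume hn p, Finset.sum_const,
            nsmul_eq_mul]
  have hne : (T.card : ℝ≥0∞) * ENNReal.ofReal ε ^ 2 ≠ ⊤ :=
    ENNReal.mul_ne_top (ENNReal.natCast_ne_top _) (ENNReal.pow_ne_top ENNReal.ofReal_ne_top)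
  have hfinvol : volume D ≠ ⊤ := ne_top_of_le_ne_top hne hvolT
  set V : ℝ := (volume D).toReal with hV
  have htoReal : ∀ m : ℕ, ((m : ℝ≥0∞) * ENNReal.ofReal ε ^ 2).toReal = (m : ℝ) * ε ^ 2 := by
    intro m
    rw [ENNReal.toReal_mul, ENNReal.toReal_pow, ENNReal.toReal_natCast,
      ENNReal.toReal_ofReal hε0.le]
  have hvolIns' : (Ins.card : ℝ) * ε ^ 2 ≤ V := by
    rw [← htoReal Ins.card]
    exact ENNReal.toReal_mono hfinvol hvolIns
  have hvolT' : V ≤ (T.card : ℝ) * ε ^ 2 := by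
    rw [← htoReal T.card]
    exact ENNReal.toReal_mono hne hvolT
  have hTcard : (T.card : ℝ) ≤ (Ins.card : ℝ) + (Ebd.card : ℝ) := by
    exact_mod_cast Finset.card_union_le Ins Ebd
  have hEcast : (bdS.ncard : ℝ) = (Ebd.card : ℝ) := by exact_mod_cast hEcard
  rw [hEcast] at hineq
  -- main real inequality
  have key : (b : ℝ) * T.card ≤ (a : ℝ) * Ins.card := by
    have hε2 : (0:ℝ) < ε ^ 2 := by positivity
    have hstep1 : (T.card : ℝ) * ε ^ 2 ≤ V + ε ^ 2 * Ebd.card := by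
      nlinarith [mul_le_mul_of_nonneg_right hTcard hε2.le]
    have hstep2 : V - ε ^ 2 * Ebd.card ≤ (Ins.card : ℝ) * ε ^ 2 := by
      nlinarith [mul_le_mul_of_nonneg_right hTcard hε2.le]
    have h1 := mul_le_mul_of_nonneg_left hstep1 (Nat.cast_nonneg b : (0:ℝ) ≤ b)
    have h2 := mul_le_mul_of_nonneg_left hstep2 (Nat.cast_nonneg a : (0:ℝ) ≤ a)
    have h3 : (b : ℝ) * T.card * ε ^ 2 ≤ (a : ℝ) * Ins.card * ε ^ 2 := by nlinarith
    exact le_of_mul_le_mul_right h3 hε2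
  have final : ((B ∩ D).ncard : ℝ) ≤ ((A ∩ D).ncard : ℝ) := by
    have h1 : ((B ∩ D).ncard : ℝ) ≤ (b : ℝ) * T.card := by exact_mod_cast hBcount
    have h2 : (a : ℝ) * Ins.card ≤ ((A ∩ D).ncard : ℝ) := by exact_mod_cast hAcount
    linarith
  exact_mod_cast final

end
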